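/- Strengthened Kirszbraun theorem with range constraint: Let m, n be natural numbers, let L ≥ 0 be a real number, let S be a nonempty subset of ℝᵐ, and let f : S → ℝⁿ be an L-Lipschitz map. Then there exists an L-Lipschitz map F : ℝᵐ → ℝⁿ such that F agrees with f on S and the range of F is contained in the closure of the convex hull of the image f(S). -/

import Mathlib

set_option maxHeartbeats 2000000

open Finset Metric

local notation "⟪" x ", " y "⟫" => @inner ℝ _ _ x y

lemma key_finite {m n : ℕ} (L : ℝ) (hL : 0 ≤ L) (C : Set (EuclideanSpace ℝ (Fin n)))
    (hCc : Convex ℝ C) (hCl : IsClosed C) (hCne : C.Nonempty)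
    {ι : Type*} (t : Finset ι) (a : ι → EuclideanSpace ℝ (Fin m))
    (z : ι → EuclideanSpace ℝ (Fin n))
    (hz : ∀ i ∈ t, z i ∈ C)
    (h : ∀ i ∈ t, ∀ j ∈ t, ‖z i - z j‖ ≤ L * ‖a i - a j‖)
    (x : EuclideanSpace ℝ (Fin m)) :
    ∃ y ∈ C, ∀ i ∈ t, ‖y - z i‖ ≤ L * ‖x - a i‖ := by
  classical
  rcases t.eq_empty_or_nonempty with rfl | ht
  · exact ⟨hCne.choose, hCne.choose_spec, by simp⟩
  set r : ι → ℝ := fun i => L * ‖x - a i‖ with hr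
  have hrnn : ∀ i, 0 ≤ r i := fun i => mul_nonneg hL (norm_nonneg _)
  by_cases h0 : ∃ i ∈ t, r i = 0
  · obtain ⟨i0, hi0, hri0⟩ := h0
    refine ⟨z i0, hz _ hi0, fun j hj => ?_⟩
    have htri : ‖a i0 - a j‖ ≤ ‖x - a i0‖ + ‖x - a j‖ := by
      have := norm_sub_le_norm_sub_add_norm_sub (a i0) x (a j)
      have h1 : ‖a i0 - x‖ = ‖x - a i0‖ := norm_sub_rev _ _
      linarith
    calc ‖z i0 - z j‖ ≤ L * ‖a i0 - a j‖ := h _ hi0 _ hj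
      _ ≤ L * (‖x - a i0‖ + ‖x - a j‖) := by nlinarith [norm_nonneg (a i0 - a j)]
      _ = r i0 + r j := by rw [hr]; ring
      _ = L * ‖x - a j‖ := by rw [hri0]; simp [hr]
  push_neg at h0
  have hrpos : ∀ i ∈ t, 0 < r i := fun i hi => (hrnn i).lt_of_ne' (h0 i hi)
  obtain ⟨i0, hi0⟩ := id ht
  set g : EuclideanSpace ℝ (Fin n) → ℝ := fun y => t.sup' ht (fun i => ‖y - z i‖ / r i)
    with hg
  have hgc : Continuous g := by
    rw [continuous_iff_continuousAt]
    intro y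
    exact ContinuousAt.finset_sup'_apply ht fun i _ =>
      ((continuous_id.sub continuous_const).norm.div_const _).continuousAt
  have hgnn : ∀ y, 0 ≤ g y := by
    intro y
    simp only [hg]
    exact le_trans (div_nonneg (norm_nonneg _) (hrnn i0))
      (Finset.le_sup' (fun i => ‖y - z i‖ / r i) hi0)
  set R : ℝ := g (z i0) * r i0 + 1 with hR
  set K : Set (EuclideanSpace ℝ (Fin n)) := C ∩ closedBall (z i0) R with hK
  have hy0K : z i0 ∈ K := by
    refine ⟨hz _ hi0, mem_closedBall_self ?_⟩
    have := hgnn (z i0); have := (hrpos i0 hi0); positivity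
  have hKc : IsCompact K := (isCompact_closedBall _ _).inter_left hCl
  obtain ⟨ys, hysK, hmin⟩ := hKc.exists_isMinOn ⟨_, hy0K⟩ hgc.continuousOn
  have hglobal : ∀ y ∈ C, g ys ≤ g y := by
    intro y hy
    by_cases hyb : y ∈ closedBall (z i0) R
    · exact hmin ⟨hy, hyb⟩
    · have h1 : R < ‖y - z i0‖ := by
        simpa [dist_eq_norm] using lt_of_not_ge (fun hc => hyb (by simpa [dist_eq_norm] using hc))
      have h2 : g (z i0) < ‖y - z i0‖ / r i0 := by
        rw [lt_div_iff₀ (hrpos i0 hi0)]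
        nlinarith [hrpos i0 hi0]
      have h3 : ‖y - z i0‖ / r i0 ≤ g y := by
        simp only [hg]; exact Finset.le_sup' (fun i => ‖y - z i‖ / r i) hi0
      have h4 : g ys ≤ g (z i0) := hmin hy0K
      linarith
  set lam : ℝ := g ys with hlamdef
  have hforall : ∀ i ∈ t, ‖ys - z i‖ ≤ lam * r i := by
    intro i hi
    have h1 : ‖ys - z i‖ / r i ≤ lam := by
      simp only [hlamdef, hg]; exact Finset.le_sup' (fun j => ‖ys - z j‖ / r j) hi
    rw [div_le_iff₀ (hrpos i hi)] at h1
    linarith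
  by_cases hlam : lam ≤ 1
  · refine ⟨ys, hysK.1, fun i hi => ?_⟩
    have h1 := hforall i hi
    have h2 : lam * r i ≤ 1 * r i := mul_le_mul_of_nonneg_right hlam (hrnn i)
    have h3 : r i = L * ‖x - a i‖ := rfl
    linarith
  push_neg at hlam
  exfalso
  -- active set
  obtain ⟨i1, hi1, hsup⟩ := t.exists_mem_eq_sup' ht (fun i => ‖ys - z i‖ / r i)
  set I : Finset ι := t.filter (fun i => ‖ys - z i‖ = lam * r i) with hI
  have hi1I : i1 ∈ I := by
    rw [hI, Finset.mem_filter]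
    refine ⟨hi1, ?_⟩
    have : lam = ‖ys - z i1‖ / r i1 := by simp only [hlamdef, hg]; exact hsup
    field_simp [ne_of_gt (hrpos i1 hi1)] at this
    linarith
  have hIt : ∀ i ∈ I, i ∈ t := fun i hi => Finset.mem_of_mem_filter i hi
  have hIact : ∀ i ∈ I, ‖ys - z i‖ = lam * r i := fun i hi => (Finset.mem_filter.mp hi).2
  set D : Set (EuclideanSpace ℝ (Fin n)) := convexHull ℝ (z '' ↑I) with hD
  have hDC : D ⊆ C := convexHull_min (by
    rintro _ ⟨i, hi, rfl⟩; exact hz i (hIt i hi)) hCc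
  have hDco : Convex ℝ D := convex_convexHull _ _
  have hDcpt : IsCompact D := (I.finite_toSet.image z).isCompact_convexHull (𝕜 := ℝ)
  have hDne : z i1 ∈ D := subset_convexHull _ _ ⟨i1, hi1I, rfl⟩
  -- ys lies in the convex hull of the active points
  have hyD : ys ∈ D := by
    by_contra hyD
    obtain ⟨p, hpD, hpmin⟩ := exists_norm_eq_iInf_of_complete_convex ⟨_, hDne⟩
      (hDcpt.isClosed.isComplete) hDco ys
    have hineq := (norm_eq_iInf_iff_real_inner_le_zero hDco hpD).mp hpmin
    set d := ys - p with hd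
    have hδ : 0 < ‖d‖ := by
      rw [norm_pos_iff, hd, sub_ne_zero]
      rintro rfl; exact hyD hpD
    set ee : ι → ℝ := fun i =>
      min 1 (if ‖ys - z i‖ = lam * r i then 1 else (lam * r i - ‖ys - z i‖) / ‖d‖) with hee
    have heepos : ∀ i ∈ t, 0 < ee i := by
      intro i hi
      rw [hee]
      simp only [lt_min_iff]
      refine ⟨one_pos, ?_⟩
      split_ifs with hact
      · exact one_pos
      · have h1 := hforall i hi
        have h2 : ‖ys - z i‖ < lam * r i := lt_of_le_of_ne h1 hact
        exact div_pos (by linarith) hδ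
    set ε : ℝ := (1/2) * t.inf' ht ee with hε
    have hinfpos : 0 < t.inf' ht ee := by
      rw [Finset.lt_inf'_iff]
      exact fun i hi => heepos i hi
    have hε0 : 0 < ε := by rw [hε]; positivity
    have hε1 : ε ≤ 1 := by
      have h1 : t.inf' ht ee ≤ ee i1 := Finset.inf'_le _ hi1
      have h2 : ee i1 ≤ 1 := min_le_left _ _
      rw [hε]; linarith
    set y' : EuclideanSpace ℝ (Fin n) := ys - ε • d with hy'
    have hy'C : y' ∈ C := by
      have := hCc hysK.1 (hDC hpD) (by linarith : (0:ℝ) ≤ 1 - ε) hε0.le (by ring)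
      convert this using 1
      rw [hy', hd]
      module
    have hlt : ∀ i ∈ t, ‖y' - z i‖ < lam * r i := by
      intro i hi
      by_cases hact : ‖ys - z i‖ = lam * r i
      · -- active point: move decreases norm
        have hzD : z i ∈ D := subset_convexHull _ _
          ⟨i, Finset.mem_coe.mpr (by rw [hI]; exact Finset.mem_filter.mpr ⟨hi, hact⟩), rfl⟩
        have hip : ⟪d, z i - p⟫ ≤ 0 := hineq _ hzD
        have hiq : ‖d‖^2 ≤ ⟪ys - z i, d⟫ := by
          have hexp : ys - z i = d + (p - z i) := by rw [hd]; abel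
          rw [hexp, inner_add_left, real_inner_self_eq_norm_sq]
          have : ⟪p - z i, d⟫ = -⟪d, z i - p⟫ := by
            rw [real_inner_comm, show p - z i = -(z i - p) by abel, inner_neg_right]
          linarith
        have hsq : ‖y' - z i‖^2 ≤ ‖ys - z i‖^2 - ε * ‖d‖^2 := by
          have hexp2 : y' - z i = (ys - z i) - ε • d := by rw [hy']; abel
          rw [hexp2, norm_sub_sq_real, norm_smul, real_inner_smul_right]
          rw [Real.norm_eq_abs, abs_of_nonneg hε0.le]
          have he2 : (ε * ‖d‖)^2 = ε^2 * ‖d‖^2 := by ring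
          nlinarith [sq_nonneg ‖d‖, hε0, hε1]
        have hlp : 0 < lam * r i := by
          have := hrpos i hi; positivity
        by_contra hge
        push_neg at hge
        have h7 : (lam * r i)^2 ≤ ‖y' - z i‖^2 := by
          have := pow_le_pow_left₀ hlp.le hge 2
          simpa using this
        rw [← hact] at h7
        have h8 : 0 < ε * ‖d‖^2 := mul_pos hε0 (pow_pos hδ 2)
        linarith
      · -- inactive point: small move stays strictly below
        have h2 : ‖ys - z i‖ < lam * r i := lt_of_le_of_ne (hforall i hi) hact
        have h3 : ‖y' - z i‖ ≤ ‖ys - z i‖ + ε * ‖d‖ := by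
          have hexp2 : y' - z i = (ys - z i) - ε • d := by rw [hy']; abel
          rw [hexp2]
          calc ‖(ys - z i) - ε • d‖ ≤ ‖ys - z i‖ + ‖ε • d‖ := norm_sub_le _ _
            _ = ‖ys - z i‖ + ε * ‖d‖ := by
              rw [norm_smul, Real.norm_eq_abs, abs_of_nonneg hε0.le]
        have h4 : ε < (lam * r i - ‖ys - z i‖) / ‖d‖ := by
          have h5 : t.inf' ht ee ≤ ee i := Finset.inf'_le _ hi
          have h6 : ee i ≤ (lam * r i - ‖ys - z i‖) / ‖d‖ := by
            rw [hee]; simp only; rw [if_neg hact]; exact min_le_right _ _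
          rw [hε]; linarith
        rw [lt_div_iff₀ hδ] at h4
        linarith
    have hcon : g y' < lam := by
      simp only [hg]
      rw [Finset.sup'_lt_iff]
      intro i hi
      rw [div_lt_iff₀ (hrpos i hi)]
      exact hlt i hi
    have := hglobal y' hy'C
    linarith
  -- extract a convex combination of active points
  rw [hD, _root_.convexHull_eq] at hyD
  obtain ⟨κ, u, w, v, hw0, hw1, hvz, hcm⟩ := hyD
  have hvz' : ∀ j, ∃ i, i ∈ I ∧ (j ∈ u → z i = v j) := by
    intro j
    by_cases hj : j ∈ u
    · obtain ⟨i, hiI, hzi⟩ := hvz j hj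
      exact ⟨i, Finset.mem_coe.mp hiI, fun _ => hzi⟩
    · exact ⟨i1, hi1I, fun hc => absurd hc hj⟩
  choose gg hggI hggz using hvz'
  set ρ : κ → ℝ := fun j => r (gg j) with hρ
  set B : κ → EuclideanSpace ℝ (Fin m) := fun j => L • (x - a (gg j)) with hB
  have hBn : ∀ j, ‖B j‖ = ρ j := by
    intro j
    simp only [hB, hρ]
    rw [norm_smul, Real.norm_eq_abs, abs_of_nonneg hL]
  have hρpos : ∀ j, 0 < ρ j := fun j => hrpos _ (hIt _ (hggI j))
  have hvact : ∀ j ∈ u, ‖ys - v j‖ = lam * ρ j := by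
    intro j hj; rw [← hggz j hj]; exact hIact _ (hggI j)
  have hvlip : ∀ j ∈ u, ∀ k ∈ u, ‖v j - v k‖ ≤ ‖B j - B k‖ := by
    intro j hj k hk
    rw [← hggz j hj, ← hggz k hk]
    have hBe : B j - B k = L • (a (gg k) - a (gg j)) := by
      simp only [hB]; module
    rw [hBe, norm_smul, Real.norm_eq_abs, abs_of_nonneg hL]
    calc ‖z (gg j) - z (gg k)‖ ≤ L * ‖a (gg j) - a (gg k)‖ :=
          h _ (hIt _ (hggI j)) _ (hIt _ (hggI k))
      _ = L * ‖a (gg k) - a (gg j)‖ := by rw [norm_sub_rev]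
  have hy : ∑ j ∈ u, w j • v j = ys := by
    rw [← Finset.centerMass_eq_of_sum_1 _ _ hw1]; exact hcm
  have hzero : ∑ j ∈ u, w j • (ys - v j) = 0 := by
    simp only [smul_sub]
    rw [Finset.sum_sub_distrib, hy, ← Finset.sum_smul, hw1, one_smul, sub_self]
  -- the double sum of inner products vanishes
  have hdz : ∑ j ∈ u, ∑ k ∈ u, (w j * w k) * ⟪ys - v j, ys - v k⟫ = 0 := by
    have h0 : ⟪∑ j ∈ u, w j • (ys - v j), ∑ k ∈ u, w k • (ys - v k)⟫ = (0:ℝ) := by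
      rw [hzero]; simp
    rw [sum_inner] at h0
    simp only [inner_sum, real_inner_smul_left, real_inner_smul_right] at h0
    calc ∑ j ∈ u, ∑ k ∈ u, (w j * w k) * ⟪ys - v j, ys - v k⟫
        = ∑ j ∈ u, ∑ k ∈ u, w k * (w j * ⟪ys - v j, ys - v k⟫) :=
          Finset.sum_congr rfl fun j _ => Finset.sum_congr rfl fun k _ => by ring
      _ = 0 := h0
  -- the analogous double sum for the B's is nonnegative
  have hBs : 0 ≤ ∑ j ∈ u, ∑ k ∈ u, (w j * w k) * ⟪B j, B k⟫ := by
    have h0 : (0:ℝ) ≤ ⟪∑ j ∈ u, w j • B j, ∑ k ∈ u, w k • B k⟫ := real_inner_self_nonneg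
    rw [sum_inner] at h0
    simp only [inner_sum, real_inner_smul_left, real_inner_smul_right] at h0
    calc (0:ℝ) ≤ ∑ j ∈ u, ∑ k ∈ u, w k * (w j * ⟪B j, B k⟫) := h0
      _ = ∑ j ∈ u, ∑ k ∈ u, (w j * w k) * ⟪B j, B k⟫ :=
          Finset.sum_congr rfl fun j _ => Finset.sum_congr rfl fun k _ => by ring
  -- termwise lower bound
  have hterm : ∀ j ∈ u, ∀ k ∈ u,
      (w j * w k) * ((lam^2 - 1) * (ρ j^2 + ρ k^2)/2) + (w j * w k) * ⟪B j, B k⟫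
        ≤ (w j * w k) * ⟪ys - v j, ys - v k⟫ := by
    intro j hj k hk
    have hwnn : 0 ≤ w j * w k := mul_nonneg (hw0 j hj) (hw0 k hk)
    have hin : (lam^2 - 1) * (ρ j^2 + ρ k^2)/2 + ⟪B j, B k⟫ ≤ ⟪ys - v j, ys - v k⟫ := by
      have e1 : ‖(ys - v j) - (ys - v k)‖^2
          = ‖ys - v j‖^2 - 2*⟪ys - v j, ys - v k⟫ + ‖ys - v k‖^2 := norm_sub_sq_real _ _
      have e3 : (ys - v j) - (ys - v k) = v k - v j := by abel
      rw [e3] at e1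
      have e4 : ‖v k - v j‖ ≤ ‖B k - B j‖ := hvlip k hk j hj
      have e5 : ‖v k - v j‖^2 ≤ ‖B k - B j‖^2 := pow_le_pow_left₀ (norm_nonneg _) e4 2
      have e6 : ‖B k - B j‖^2 = ρ k^2 - 2*⟪B k, B j⟫ + ρ j^2 := by
        rw [norm_sub_sq_real, hBn, hBn]
      have e7 : ⟪B k, B j⟫ = ⟪B j, B k⟫ := real_inner_comm _ _
      have a1 : ‖ys - v j‖^2 = lam^2 * ρ j^2 := by rw [hvact j hj]; ring
      have a2 : ‖ys - v k‖^2 = lam^2 * ρ k^2 := by rw [hvact k hk]; ring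
      rw [a1, a2] at e1
      rw [e7] at e6
      rw [e6] at e5
      linarith
    calc (w j * w k) * ((lam^2 - 1) * (ρ j^2 + ρ k^2)/2) + (w j * w k) * ⟪B j, B k⟫
        = (w j * w k) * ((lam^2 - 1) * (ρ j^2 + ρ k^2)/2 + ⟪B j, B k⟫) := by ring
      _ ≤ (w j * w k) * ⟪ys - v j, ys - v k⟫ := mul_le_mul_of_nonneg_left hin hwnn
  -- the diagonal double sum collapses
  have hdouble : ∑ j ∈ u, ∑ k ∈ u, (w j * w k) * ((lam^2 - 1) * (ρ j^2 + ρ k^2)/2)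
      = (lam^2 - 1) * ∑ j ∈ u, w j * ρ j^2 := by
    have h1 : ∀ j, ∑ k ∈ u, (w j * w k) * ((lam^2 - 1) * (ρ j^2 + ρ k^2)/2)
        = (lam^2 - 1)/2 * (w j * ρ j^2) * (∑ k ∈ u, w k)
          + (lam^2 - 1)/2 * w j * (∑ k ∈ u, w k * ρ k^2) := by
      intro j
      rw [Finset.mul_sum, Finset.mul_sum, ← Finset.sum_add_distrib]
      exact Finset.sum_congr rfl fun k _ => by ring
    simp only [h1, hw1, mul_one]
    rw [Finset.sum_add_distrib, ← Finset.mul_sum, ← Finset.sum_mul, ← Finset.mul_sum,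
      hw1, mul_one]
    ring
  have hle : ∑ j ∈ u, ∑ k ∈ u,
      ((w j * w k) * ((lam^2 - 1) * (ρ j^2 + ρ k^2)/2) + (w j * w k) * ⟪B j, B k⟫)
      ≤ ∑ j ∈ u, ∑ k ∈ u, (w j * w k) * ⟪ys - v j, ys - v k⟫ :=
    Finset.sum_le_sum fun j hj => Finset.sum_le_sum fun k hk => hterm j hj k hk
  rw [hdz] at hle
  simp only [Finset.sum_add_distrib] at hle
  rw [hdouble] at hle
  have hSpos : 0 < ∑ j ∈ u, w j * ρ j^2 := by
    obtain ⟨j, hj, hwj⟩ : ∃ j ∈ u, 0 < w j := by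
      by_contra hc
      push_neg at hc
      have hns : ∑ j ∈ u, w j ≤ 0 := Finset.sum_nonpos hc
      rw [hw1] at hns; linarith
    exact Finset.sum_pos' (fun k hk => mul_nonneg (hw0 k hk) (sq_nonneg _))
      ⟨j, hj, mul_pos hwj (pow_pos (hρpos j) 2)⟩
  have hfin : 0 < (lam^2 - 1) * ∑ j ∈ u, w j * ρ j^2 :=
    mul_pos (by nlinarith) hSpos
  linarith


lemma key_point {m n : ℕ} (L : ℝ) (hL : 0 ≤ L) (C : Set (EuclideanSpace ℝ (Fin n)))
    (hCc : Convex ℝ C) (hCl : IsClosed C) (hCne : C.Nonempty)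
    (T : Set (EuclideanSpace ℝ (Fin m) × EuclideanSpace ℝ (Fin n)))
    (hTne : T.Nonempty)
    (hTC : ∀ p ∈ T, p.2 ∈ C)
    (hTlip : ∀ p ∈ T, ∀ q ∈ T, ‖p.2 - q.2‖ ≤ L * ‖p.1 - q.1‖)
    (x : EuclideanSpace ℝ (Fin m)) :
    ∃ y ∈ C, ∀ q ∈ T, ‖y - q.2‖ ≤ L * ‖x - q.1‖ := by
  classical
  haveI : DecidableEq (↥T) := Classical.decEq _
  obtain ⟨q0, hq0⟩ := hTne
  set s : Set (EuclideanSpace ℝ (Fin n)) :=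
    C ∩ Metric.closedBall q0.2 (L * ‖x - q0.1‖) with hs
  set tt : ↥T → Set (EuclideanSpace ℝ (Fin n)) := fun q =>
    Metric.closedBall q.1.2 (L * ‖x - q.1.1‖) with htt
  have hcompact : IsCompact s := (isCompact_closedBall _ _).inter_left hCl
  have hclosed : ∀ q : ↥T, IsClosed (tt q) := fun q => Metric.isClosed_closedBall
  have hfin : ∀ u : Finset ↥T, (s ∩ ⋂ q ∈ u, tt q).Nonempty := by
    intro u
    obtain ⟨y, hyC, hy⟩ := key_finite L hL C hCc hCl hCne (insert ⟨q0, hq0⟩ u)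
      (fun q => q.1.1) (fun q => q.1.2)
      (fun q _ => hTC _ q.2) (fun i _ j _ => hTlip _ i.2 _ j.2) x
    refine ⟨y, ⟨hyC, ?_⟩, ?_⟩
    · rw [Metric.mem_closedBall, dist_eq_norm]
      exact hy ⟨q0, hq0⟩ (Finset.mem_insert_self ⟨q0, hq0⟩ u)
    · rw [Set.mem_iInter₂]
      intro q hq
      rw [htt]
      rw [Metric.mem_closedBall, dist_eq_norm]
      exact hy q (Finset.mem_insert_of_mem hq)
  obtain ⟨y, hys, hy⟩ := hcompact.inter_iInter_nonempty tt hclosed hfin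
  refine ⟨y, hys.1, ?_⟩
  intro q hq
  have h1 := Set.mem_iInter.mp hy ⟨q, hq⟩
  rw [htt] at h1
  rw [Metric.mem_closedBall, dist_eq_norm] at h1
  exact h1

/-- Strengthened Kirszbraun theorem: every `L`-Lipschitz map `f : S → ℝⁿ`, `∅ ≠ S ⊆ ℝᵐ`,
extends to an `L`-Lipschitz map `F : ℝᵐ → ℝⁿ` with range contained in the closure of the
convex hull of `f '' S`. -/
theorem kirszbraun_range (m n : ℕ) (L : ℝ) (hL : 0 ≤ L)
    (S : Set (EuclideanSpace ℝ (Fin m))) (hS : S.Nonempty)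
    (f : EuclideanSpace ℝ (Fin m) → EuclideanSpace ℝ (Fin n))
    (hf : ∀ x ∈ S, ∀ y ∈ S, ‖f x - f y‖ ≤ L * ‖x - y‖) :
    ∃ F : EuclideanSpace ℝ (Fin m) → EuclideanSpace ℝ (Fin n),
      (∀ x ∈ S, F x = f x) ∧ (∀ x y, ‖F x - F y‖ ≤ L * ‖x - y‖) ∧
      Set.range F ⊆ closure (convexHull ℝ (f '' S)) := by
  classical
  set C := closure (convexHull ℝ (f '' S)) with hC
  have hCc : Convex ℝ C := (convex_convexHull ℝ _).closure
  have hCl : IsClosed C := isClosed_closure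
  have hfC : ∀ x ∈ S, f x ∈ C := fun x hx =>
    subset_closure (subset_convexHull _ _ ⟨x, hx, rfl⟩)
  have hCne : C.Nonempty := ⟨f hS.choose, hfC _ hS.choose_spec⟩
  set T0 : Set (EuclideanSpace ℝ (Fin m) × EuclideanSpace ℝ (Fin n)) :=
    (fun s => (s, f s)) '' S with hT0
  set G : Set (Set (EuclideanSpace ℝ (Fin m) × EuclideanSpace ℝ (Fin n))) :=
    {T | T0 ⊆ T ∧ (∀ p ∈ T, p.2 ∈ C) ∧ ∀ p ∈ T, ∀ q ∈ T, ‖p.2 - q.2‖ ≤ L * ‖p.1 - q.1‖}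
    with hG
  have hT0G : T0 ∈ G := by
    refine ⟨subset_rfl, ?_, ?_⟩
    · rintro p ⟨s, hs, rfl⟩; exact hfC s hs
    · rintro p ⟨s, hs, rfl⟩ q ⟨u, hu, rfl⟩; exact hf s hs u hu
  have hchain : ∀ c ⊆ G, IsChain (· ⊆ ·) c → c.Nonempty →
      ∃ ub ∈ G, ∀ s ∈ c, s ⊆ ub := by
    intro c hc hch hcne
    refine ⟨⋃₀ c, ⟨?_, ?_, ?_⟩, fun s hs => Set.subset_sUnion_of_mem hs⟩
    · obtain ⟨T, hT⟩ := hcne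
      exact (hc hT).1.trans (Set.subset_sUnion_of_mem hT)
    · rintro p ⟨T, hT, hp⟩; exact (hc hT).2.1 p hp
    · rintro p ⟨T, hT, hp⟩ q ⟨U, hU, hq⟩
      rcases hch.total hT hU with hTU | hUT
      · exact (hc hU).2.2 p (hTU hp) q hq
      · exact (hc hT).2.2 p hp q (hUT hq)
  obtain ⟨M, hT0M, hMmax⟩ := zorn_subset_nonempty G hchain T0 hT0G
  obtain ⟨-, hMC, hMlip⟩ := hMmax.1
  have htotal : ∀ x, ∃ y, (x, y) ∈ M := by
    intro x
    have hMne : M.Nonempty := by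
      obtain ⟨s, hs⟩ := hS
      exact ⟨(s, f s), hT0M ⟨s, hs, rfl⟩⟩
    obtain ⟨y, hyC, hy⟩ := key_point L hL C hCc hCl hCne M hMne hMC hMlip x
    refine ⟨y, ?_⟩
    have hM' : insert (x, y) M ∈ G := by
      refine ⟨hT0M.trans (Set.subset_insert _ _), ?_, ?_⟩
      · rintro p hp
        rcases Set.mem_insert_iff.mp hp with rfl | hp
        · exact hyC
        · exact hMC p hp
      · rintro p hp q hq
        rcases Set.mem_insert_iff.mp hp with rfl | hp <;>
          rcases Set.mem_insert_iff.mp hq with rfl | hq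
        · simp [mul_nonneg hL (norm_nonneg _)]
        · exact hy q hq
        · have h1 := hy p hp
          rw [norm_sub_rev, norm_sub_rev x] at h1
          exact h1
        · exact hMlip p hp q hq
    exact hMmax.2 hM' (Set.subset_insert _ _) (Set.mem_insert _ _)
  choose F hF using htotal
  have hlipF : ∀ x y, ‖F x - F y‖ ≤ L * ‖x - y‖ := by
    intro x y
    exact hMlip (x, F x) (hF x) (y, F y) (hF y)
  refine ⟨F, ?_, hlipF, ?_⟩
  · intro x hx
    have h1 : (x, f x) ∈ M := hT0M ⟨x, hx, rfl⟩
    have h2 := hMlip (x, F x) (hF x) (x, f x) h1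
    simp only [sub_self, norm_zero, mul_zero] at h2
    have h3 : ‖F x - f x‖ = 0 := le_antisymm h2 (norm_nonneg _)
    rw [norm_eq_zero, sub_eq_zero] at h3
    exact h3
  · rintro _ ⟨x, rfl⟩
    exact hMC (x, F x) (hF x)
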